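/- Fix τ ∈ ℂ with Im τ > 0, and let θ₁₁(z) = ∑_{n ∈ ℤ} exp(πiτ(n+1/2)² + 2πi(n+1/2)(z+1/2)). Then for all a, b, c, d, t ∈ ℂ: θ₁₁(b+c−t)·θ₁₁(b−c)·θ₁₁(d+a−t)·θ₁₁(d−a) + θ₁₁(c+a−t)·θ₁₁(c−a)·θ₁₁(d+b−t)·θ₁₁(d−b) + θ₁₁(a+b−t)·θ₁₁(a−b)·θ₁₁(d+c−t)·θ₁₁(d−c) = 0. Equivalently, setting F_t(u,v) = θ₁₁(u+v−t)·θ₁₁(u−v), one has F_t(b,c)F_t(d,a) + F_t(c,a)F_t(d,b) + F_t(a,b)F_t(d,c) = 0. -/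
import Mathlib


open Complex

/-- The Jacobi theta function with characteristic `(1,1)` for the modulus `τ`:
`θ₁₁(z) = ∑_{n ∈ ℤ} exp(πiτ(n+1/2)² + 2πi(n+1/2)(z+1/2))`. -/
noncomputable def theta11 (τ z : ℂ) : ℂ :=
  ∑' n : ℤ,
    Complex.exp ((Real.pi : ℂ) * Complex.I * τ * ((n : ℂ) + 1 / 2) ^ 2
      + 2 * (Real.pi : ℂ) * Complex.I * ((n : ℂ) + 1 / 2) * (z + 1 / 2))

namespace FayAux

noncomputable def term (τ z : ℂ) (n : ℤ) : ℂ :=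
  Complex.exp ((Real.pi : ℂ) * Complex.I * τ * ((n : ℂ) + 1 / 2) ^ 2
      + 2 * (Real.pi : ℂ) * Complex.I * ((n : ℂ) + 1 / 2) * (z + 1 / 2))

lemma theta11_eq (τ z : ℂ) : theta11 τ z = ∑' n : ℤ, term τ z n := rfl

noncomputable def Pf (τ x : ℂ) (k : ℤ) : ℂ :=
  Complex.exp ((Real.pi : ℂ) * Complex.I * τ * (2 * (k : ℂ) + 1) ^ 2 / 2
      + 2 * (Real.pi : ℂ) * Complex.I * (2 * (k : ℂ) + 1) * x)

noncomputable def Qf (τ x : ℂ) (k : ℤ) : ℂ :=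
  Complex.exp ((Real.pi : ℂ) * Complex.I * τ * (2 * (k : ℂ)) ^ 2 / 2
      + 2 * (Real.pi : ℂ) * Complex.I * (2 * (k : ℂ)) * x)

noncomputable def Pth (τ x : ℂ) : ℂ := ∑' k : ℤ, Pf τ x k
noncomputable def Qth (τ x : ℂ) : ℂ := ∑' k : ℤ, Qf τ x k

lemma summable_term {τ : ℂ} (hτ : 0 < τ.im) (z : ℂ) : Summable (term τ z) := by
  have h : Summable fun n : ℤ => jacobiTheta₂_term n (z + 1 / 2 + τ / 2) τ :=
    (summable_jacobiTheta₂_term_iff _ τ).mpr hτ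
  have := h.mul_left (Complex.exp ((Real.pi : ℂ) * Complex.I * τ / 4
      + (Real.pi : ℂ) * Complex.I * (z + 1 / 2)))
  refine this.congr fun n => ?_
  rw [jacobiTheta₂_term, ← Complex.exp_add, term]
  congr 1
  ring

lemma summable_Pf {τ : ℂ} (hτ : 0 < τ.im) (x : ℂ) : Summable (Pf τ x) := by
  have h : Summable fun k : ℤ => jacobiTheta₂_term k (2 * x + τ) (2 * τ) :=
    (summable_jacobiTheta₂_term_iff _ _).mpr (by simpa using by positivity)
  have := h.mul_left (Complex.exp ((Real.pi : ℂ) * Complex.I * τ / 2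
      + 2 * (Real.pi : ℂ) * Complex.I * x))
  refine this.congr fun k => ?_
  rw [jacobiTheta₂_term, ← Complex.exp_add, Pf]
  congr 1
  ring

lemma summable_Qf {τ : ℂ} (hτ : 0 < τ.im) (x : ℂ) : Summable (Qf τ x) := by
  have h : Summable fun k : ℤ => jacobiTheta₂_term k (2 * x) (2 * τ) :=
    (summable_jacobiTheta₂_term_iff _ _).mpr (by simpa using by positivity)
  refine h.congr fun k => ?_
  rw [jacobiTheta₂_term, Qf]
  congr 1
  ring

/-- The set of pairs with even coordinate sum. -/
def S : Set (ℤ × ℤ) := {p | (p.1 + p.2) % 2 = 0}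

noncomputable def eEven : (ℤ × ℤ) ≃ S where
  toFun p := ⟨(p.1 + p.2, p.1 - p.2), by simp only [S, Set.mem_setOf_eq]; omega⟩
  invFun p := ((p.1.1 + p.1.2) / 2, (p.1.1 - p.1.2) / 2)
  left_inv p := by
    obtain ⟨k, l⟩ := p
    simp only [Prod.mk.injEq]
    constructor <;> omega
  right_inv p := by
    obtain ⟨⟨m, n⟩, hp⟩ := p
    simp only [S, Set.mem_setOf_eq] at hp
    ext <;> simp <;> omega

noncomputable def eOdd : (ℤ × ℤ) ≃ (Sᶜ : Set (ℤ × ℤ)) where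
  toFun p := ⟨(p.1 + p.2, p.1 - p.2 - 1), by
    simp only [S, Set.mem_compl_iff, Set.mem_setOf_eq]; omega⟩
  invFun p := ((p.1.1 + p.1.2 + 1) / 2, (p.1.1 - p.1.2 - 1) / 2)
  left_inv p := by
    obtain ⟨k, l⟩ := p
    simp only [Prod.mk.injEq]
    constructor <;> omega
  right_inv p := by
    obtain ⟨⟨m, n⟩, hp⟩ := p
    simp only [S, Set.mem_compl_iff, Set.mem_setOf_eq] at hp
    ext <;> simp <;> omega

lemma term_mul_even (τ x y : ℂ) (k l : ℤ) :
    term τ (x + y) (k + l) * term τ (x - y) (k - l) = -(Pf τ x k * Qf τ y l) := by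
  rw [term, term, Pf, Qf, ← Complex.exp_add, ← Complex.exp_add]
  have h : ((Real.pi : ℂ) * Complex.I * τ * (((k + l : ℤ) : ℂ) + 1 / 2) ^ 2
      + 2 * (Real.pi : ℂ) * Complex.I * (((k + l : ℤ) : ℂ) + 1 / 2) * (x + y + 1 / 2))
      + ((Real.pi : ℂ) * Complex.I * τ * (((k - l : ℤ) : ℂ) + 1 / 2) ^ 2
      + 2 * (Real.pi : ℂ) * Complex.I * (((k - l : ℤ) : ℂ) + 1 / 2) * (x - y + 1 / 2))
      = (((Real.pi : ℂ) * Complex.I * τ * (2 * (k : ℂ) + 1) ^ 2 / 2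
      + 2 * (Real.pi : ℂ) * Complex.I * (2 * (k : ℂ) + 1) * x)
      + ((Real.pi : ℂ) * Complex.I * τ * (2 * (l : ℂ)) ^ 2 / 2
      + 2 * (Real.pi : ℂ) * Complex.I * (2 * (l : ℂ)) * y))
      + ((Real.pi : ℂ) * Complex.I + (k : ℂ) * (2 * (Real.pi : ℂ) * Complex.I)) := by
    push_cast
    ring
  simp only [h, Complex.exp_add, Complex.exp_pi_mul_I, Complex.exp_int_mul_two_pi_mul_I]
  ring

lemma term_mul_odd (τ x y : ℂ) (k l : ℤ) :
    term τ (x + y) (k + l) * term τ (x - y) (k - l - 1) = Qf τ x k * Pf τ y l := by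
  rw [term, term, Pf, Qf, ← Complex.exp_add, ← Complex.exp_add]
  have h : ((Real.pi : ℂ) * Complex.I * τ * (((k + l : ℤ) : ℂ) + 1 / 2) ^ 2
      + 2 * (Real.pi : ℂ) * Complex.I * (((k + l : ℤ) : ℂ) + 1 / 2) * (x + y + 1 / 2))
      + ((Real.pi : ℂ) * Complex.I * τ * (((k - l - 1 : ℤ) : ℂ) + 1 / 2) ^ 2
      + 2 * (Real.pi : ℂ) * Complex.I * (((k - l - 1 : ℤ) : ℂ) + 1 / 2) * (x - y + 1 / 2))
      = (((Real.pi : ℂ) * Complex.I * τ * (2 * (k : ℂ)) ^ 2 / 2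
      + 2 * (Real.pi : ℂ) * Complex.I * (2 * (k : ℂ)) * x)
      + ((Real.pi : ℂ) * Complex.I * τ * (2 * (l : ℂ) + 1) ^ 2 / 2
      + 2 * (Real.pi : ℂ) * Complex.I * (2 * (l : ℂ) + 1) * y))
      + ((k : ℂ) * (2 * (Real.pi : ℂ) * Complex.I)) := by
    push_cast
    ring
  simp only [h, Complex.exp_add, Complex.exp_int_mul_two_pi_mul_I]
  ring

/-- Key factorization: `θ₁₁(x+y)θ₁₁(x−y) = Q(x)P(y) − P(x)Q(y)`. -/
lemma key {τ : ℂ} (hτ : 0 < τ.im) (x y : ℂ) :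
    theta11 τ (x + y) * theta11 τ (x - y)
      = Qth τ x * Pth τ y - Pth τ x * Qth τ y := by
  have hn : ∀ z : ℂ, Summable fun n : ℤ => ‖term τ z n‖ := fun z =>
    summable_norm_iff.mpr (summable_term hτ z)
  have hPn : ∀ z : ℂ, Summable fun k : ℤ => ‖Pf τ z k‖ := fun z =>
    summable_norm_iff.mpr (summable_Pf hτ z)
  have hQn : ∀ z : ℂ, Summable fun k : ℤ => ‖Qf τ z k‖ := fun z =>
    summable_norm_iff.mpr (summable_Qf hτ z)
  set f : ℤ × ℤ → ℂ := fun p => term τ (x + y) p.1 * term τ (x - y) p.2 with hf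
  -- Sum over the even part
  have hEven : HasSum (f ∘ (↑) : S → ℂ) (-(Pth τ x * Qth τ y)) := by
    rw [← (eEven).hasSum_iff]
    have h1 : Summable fun p : ℤ × ℤ => Pf τ x p.1 * Qf τ y p.2 :=
      summable_mul_of_summable_norm (hPn x) (hQn y)
    have h2 : (∑' p : ℤ × ℤ, Pf τ x p.1 * Qf τ y p.2) = Pth τ x * Qth τ y :=
      (tsum_mul_tsum_of_summable_norm (hPn x) (hQn y)).symm
    have h3 : HasSum (fun p : ℤ × ℤ => Pf τ x p.1 * Qf τ y p.2) (Pth τ x * Qth τ y) :=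
      h2 ▸ h1.hasSum
    have h4 := h3.neg
    refine h4.congr_fun fun p => ?_
    obtain ⟨k, l⟩ := p
    simp only [Function.comp_apply, eEven, Equiv.coe_fn_mk, hf]
    exact (term_mul_even τ x y k l).symm ▸ (term_mul_even τ x y k l)
  have hOdd : HasSum (f ∘ (↑) : (Sᶜ : Set (ℤ × ℤ)) → ℂ) (Qth τ x * Pth τ y) := by
    rw [← (eOdd).hasSum_iff]
    have h1 : Summable fun p : ℤ × ℤ => Qf τ x p.1 * Pf τ y p.2 :=
      summable_mul_of_summable_norm (hQn x) (hPn y)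
    have h2 : (∑' p : ℤ × ℤ, Qf τ x p.1 * Pf τ y p.2) = Qth τ x * Pth τ y :=
      (tsum_mul_tsum_of_summable_norm (hQn x) (hPn y)).symm
    have h3 : HasSum (fun p : ℤ × ℤ => Qf τ x p.1 * Pf τ y p.2) (Qth τ x * Pth τ y) :=
      h2 ▸ h1.hasSum
    refine h3.congr_fun fun p => ?_
    obtain ⟨k, l⟩ := p
    simp only [Function.comp_apply, eOdd, Equiv.coe_fn_mk, hf]
    exact (term_mul_odd τ x y k l)
  have hsum : HasSum f (-(Pth τ x * Qth τ y) + Qth τ x * Pth τ y) :=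
    hEven.add_compl hOdd
  have hprod : theta11 τ (x + y) * theta11 τ (x - y) = ∑' p : ℤ × ℤ, f p := by
    rw [theta11_eq, theta11_eq]
    exact tsum_mul_tsum_of_summable_norm (hn (x + y)) (hn (x - y))
  rw [hprod, hsum.tsum_eq]
  ring

end FayAux

/-- **Fay's trisecant identity in Mumford's three-term form** on a genus one
curve `ℂ/(ℤ + τℤ)`, where the prime form is `E(x,y) = θ₁₁(x−y)`:
`θ₁₁(b+c−t)θ₁₁(b−c)θ₁₁(d+a−t)θ₁₁(d−a) + θ₁₁(c+a−t)θ₁₁(c−a)θ₁₁(d+b−t)θ₁₁(d−b)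
 + θ₁₁(a+b−t)θ₁₁(a−b)θ₁₁(d+c−t)θ₁₁(d−c) = 0`. -/
theorem fay_trisecant_mumford (τ : ℂ) (hτ : 0 < τ.im) (a b c d t : ℂ) :
    theta11 τ (b + c - t) * theta11 τ (b - c) * theta11 τ (d + a - t) * theta11 τ (d - a)
      + theta11 τ (c + a - t) * theta11 τ (c - a) * theta11 τ (d + b - t) * theta11 τ (d - b)
      + theta11 τ (a + b - t) * theta11 τ (a - b) * theta11 τ (d + c - t) * theta11 τ (d - c)
      = 0 := by
  set A := a - t / 2
  set B := b - t / 2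
  set C := c - t / 2
  set D := d - t / 2
  have e1 : b + c - t = B + C := by simp only [B, C]; ring
  have e2 : b - c = B - C := by simp only [B, C]; ring
  have e3 : d + a - t = D + A := by simp only [D, A]; ring
  have e4 : d - a = D - A := by simp only [D, A]; ring
  have e5 : c + a - t = C + A := by simp only [C, A]; ring
  have e6 : c - a = C - A := by simp only [C, A]; ring
  have e7 : d + b - t = D + B := by simp only [D, B]; ring
  have e8 : d - b = D - B := by simp only [D, B]; ring
  have e9 : a + b - t = A + B := by simp only [A, B]; ring
  have e10 : a - b = A - B := by simp only [A, B]; ring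
  have e11 : d + c - t = D + C := by simp only [D, C]; ring
  have e12 : d - c = D - C := by simp only [D, C]; ring
  rw [e1, e2, e3, e4, e5, e6, e7, e8, e9, e10, e11, e12]
  rw [mul_assoc, mul_assoc, mul_assoc, mul_assoc, mul_assoc, mul_assoc,
    ← mul_assoc (theta11 τ (B + C)), ← mul_assoc (theta11 τ (C + A)),
    ← mul_assoc (theta11 τ (A + B))]
  rw [show theta11 τ (B + C) * theta11 τ (B - C) * (theta11 τ (D + A) * theta11 τ (D - A))
      + theta11 τ (C + A) * theta11 τ (C - A) * (theta11 τ (D + B) * theta11 τ (D - B))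
      + theta11 τ (A + B) * theta11 τ (A - B) * (theta11 τ (D + C) * theta11 τ (D - C))
      = (theta11 τ (B + C) * theta11 τ (B - C)) * (theta11 τ (D + A) * theta11 τ (D - A))
      + (theta11 τ (C + A) * theta11 τ (C - A)) * (theta11 τ (D + B) * theta11 τ (D - B))
      + (theta11 τ (A + B) * theta11 τ (A - B)) * (theta11 τ (D + C) * theta11 τ (D - C))
      from by ring]
  rw [FayAux.key hτ B C, FayAux.key hτ D A, FayAux.key hτ C A, FayAux.key hτ D B,
    FayAux.key hτ A B, FayAux.key hτ D C]
  ring
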